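/- Let A be a random subset of {1,…,n} with independent inclusion probability α ∈ [0,1], and X = deg lcm([A]_q). Then V[X] ≪ α n³, with an absolute implied constant. -/

import Mathlib

open Polynomial

/-- Probability of drawing exactly the subset `A ⊆ {1,…,n}` in the model `B(n,α)`. -/
noncomputable def prob (n : ℕ) (α : ℝ) (A : Finset ℕ) : ℝ :=
  α ^ A.card * (1 - α) ^ (n - A.card)

/-- `X(A) = deg lcm([A]_q)`. -/
noncomputable def degLcm (A : Finset ℕ) : ℕ :=
  (A.lcm fun k => ∑ i ∈ Finset.range k, (X : ℚ[X]) ^ i).natDegree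

/-- Expectation of `f` under the Bernoulli(α) product measure on subsets of `S`. -/
noncomputable def Ex (α : ℝ) (S : Finset ℕ) (f : Finset ℕ → ℝ) : ℝ :=
  ∑ A ∈ S.powerset, α ^ A.card * (1 - α) ^ (S.card - A.card) * f A

lemma Ex_empty (α : ℝ) (f : Finset ℕ → ℝ) : Ex α ∅ f = f ∅ := by
  simp [Ex]

lemma Ex_insert (α : ℝ) {m : ℕ} {S : Finset ℕ} (hm : m ∉ S) (f : Finset ℕ → ℝ) :
    Ex α (insert m S) f
      = (1 - α) * Ex α S f + α * Ex α S (fun A => f (insert m A)) := by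
  unfold Ex
  rw [Finset.sum_powerset_insert hm, Finset.mul_sum, Finset.mul_sum]
  congr 1
  · apply Finset.sum_congr rfl
    intro A hA
    have hAS : A ⊆ S := Finset.mem_powerset.mp hA
    have hcard : A.card ≤ S.card := Finset.card_le_card hAS
    rw [Finset.card_insert_of_notMem hm]
    have : S.card + 1 - A.card = (S.card - A.card) + 1 := by omega
    rw [this, pow_succ]
    ring
  · apply Finset.sum_congr rfl
    intro A hA
    have hAS : A ⊆ S := Finset.mem_powerset.mp hA
    have hmA : m ∉ A := fun h => hm (hAS h)
    rw [Finset.card_insert_of_notMem hm, Finset.card_insert_of_notMem hmA]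
    have : S.card + 1 - (A.card + 1) = S.card - A.card := by omega
    rw [this, pow_succ]
    ring

lemma Ex_sub (α : ℝ) (S : Finset ℕ) (f g : Finset ℕ → ℝ) :
    Ex α S f - Ex α S g = Ex α S (fun A => f A - g A) := by
  unfold Ex
  rw [← Finset.sum_sub_distrib]
  apply Finset.sum_congr rfl
  intro A _
  ring

lemma Ex_one (α : ℝ) (S : Finset ℕ) : Ex α S (fun _ => 1) = 1 := by
  induction S using Finset.induction_on with
  | empty => simp [Ex]
  | insert _ _ hm ih => rw [Ex_insert α hm]; rw [ih]; ring

lemma abs_Ex_le (α L : ℝ) (hα : 0 ≤ α) (hα1 : α ≤ 1) (S : Finset ℕ) (f : Finset ℕ → ℝ)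
    (hf : ∀ A ∈ S.powerset, |f A| ≤ L) : |Ex α S f| ≤ L := by
  have hβ : 0 ≤ 1 - α := by linarith
  have hw : ∀ A ∈ S.powerset, 0 ≤ α ^ A.card * (1 - α) ^ (S.card - A.card) :=
    fun A _ => mul_nonneg (pow_nonneg hα _) (pow_nonneg hβ _)
  calc |Ex α S f| ≤ ∑ A ∈ S.powerset, |α ^ A.card * (1 - α) ^ (S.card - A.card) * f A| :=
        Finset.abs_sum_le_sum_abs _ _
    _ ≤ ∑ A ∈ S.powerset, α ^ A.card * (1 - α) ^ (S.card - A.card) * L := by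
        apply Finset.sum_le_sum
        intro A hA
        rw [abs_mul, abs_of_nonneg (hw A hA)]
        exact mul_le_mul_of_nonneg_left (hf A hA) (hw A hA)
    _ = Ex α S (fun _ => 1) * L := by
        unfold Ex; rw [Finset.sum_mul]; apply Finset.sum_congr rfl; intros; ring
    _ = L := by rw [Ex_one]; ring

/-- Efron–Stein / tensorization bound for the variance of a coordinatewise
`L`-Lipschitz function of a Bernoulli(α) random subset. -/
lemma var_le (α L : ℝ) (hα : 0 ≤ α) (hα1 : α ≤ 1) (S : Finset ℕ) (f : Finset ℕ → ℝ)
    (hf : ∀ k ∈ S, ∀ A ∈ S.powerset, |f (insert k A) - f A| ≤ L) :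
    Ex α S (fun A => f A ^ 2) - (Ex α S f) ^ 2 ≤ S.card * (α * (1 - α) * L ^ 2) := by
  induction S using Finset.induction_on generalizing f with
  | empty => simp [Ex]
  | @insert m S' hm ih =>
    have hf0 : ∀ k ∈ S', ∀ A ∈ S'.powerset, |f (insert k A) - f A| ≤ L := by
      intro k hk A hA
      exact hf k (Finset.mem_insert_of_mem hk) A
        (Finset.mem_powerset.mpr ((Finset.mem_powerset.mp hA).trans (Finset.subset_insert m S')))
    have hf1 : ∀ k ∈ S', ∀ A ∈ S'.powerset,
        |(fun A => f (insert m A)) (insert k A) - (fun A => f (insert m A)) A| ≤ L := by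
      intro k hk A hA
      simp only
      rw [Finset.insert_comm]
      exact hf k (Finset.mem_insert_of_mem hk) (insert m A)
        (Finset.mem_powerset.mpr (Finset.insert_subset_insert m (Finset.mem_powerset.mp hA)))
    have h0 := ih f hf0
    have h1 := ih (fun A => f (insert m A)) hf1
    have hcross : |Ex α S' f - Ex α S' (fun A => f (insert m A))| ≤ L := by
      rw [Ex_sub]
      apply abs_Ex_le α L hα hα1
      intro A hA
      rw [abs_sub_comm]
      exact hf m (Finset.mem_insert_self m S') A
        (Finset.mem_powerset.mpr ((Finset.mem_powerset.mp hA).trans (Finset.subset_insert m S')))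
    rw [Ex_insert α hm, Ex_insert α hm f, Finset.card_insert_of_notMem hm]
    set e0 := Ex α S' f
    set e1 := Ex α S' (fun A => f (insert m A))
    set q0 := Ex α S' (fun A => f A ^ 2)
    set q1 := Ex α S' (fun A => f (insert m A) ^ 2)
    have hβ : 0 ≤ 1 - α := by linarith
    have hL2 : (e0 - e1) ^ 2 ≤ L ^ 2 := by
      have := abs_nonneg (e0 - e1)
      nlinarith [hcross, sq_abs (e0 - e1)]
    have hcard : (0:ℝ) ≤ (S'.card : ℝ) := Nat.cast_nonneg _
    push_cast
    nlinarith [mul_nonneg hα hβ, mul_le_mul_of_nonneg_left hL2 (mul_nonneg hα hβ),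
      mul_le_mul_of_nonneg_left h0 hβ, mul_le_mul_of_nonneg_left h1 hα,
      mul_nonneg (mul_nonneg hα hβ) (sq_nonneg L),
      mul_nonneg hcard (mul_nonneg (mul_nonneg hα hβ) (sq_nonneg L))]

lemma geom_ne_zero {k : ℕ} (hk : 1 ≤ k) : (∑ i ∈ Finset.range k, (X : ℚ[X]) ^ i) ≠ 0 := by
  intro h
  have := congrArg (Polynomial.eval 1) h
  simp [Polynomial.eval_finset_sum] at this
  omega

lemma lcm_ne_zero {n : ℕ} {A : Finset ℕ} (hA : A ⊆ Finset.Icc 1 n) :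
    (A.lcm fun k => ∑ i ∈ Finset.range k, (X : ℚ[X]) ^ i) ≠ 0 := by
  intro h
  rw [Finset.lcm_eq_zero_iff] at h
  obtain ⟨j, hj, hj0⟩ := h
  have hj1 : 1 ≤ j := (Finset.mem_Icc.mp (hA hj)).1
  exact geom_ne_zero hj1 hj0

lemma degLcm_lipschitz {n k : ℕ} (hk : k ∈ Finset.Icc 1 n) {A : Finset ℕ}
    (hA : A ⊆ Finset.Icc 1 n) :
    |(degLcm (insert k A) : ℝ) - (degLcm A : ℝ)| ≤ (n : ℝ) := by
  obtain ⟨hk1, hkn⟩ := Finset.mem_Icc.mp hk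
  set g : ℕ → ℚ[X] := fun k => ∑ i ∈ Finset.range k, (X : ℚ[X]) ^ i with hg
  have hgk : g k ≠ 0 := geom_ne_zero hk1
  have hP : A.lcm g ≠ 0 := lcm_ne_zero hA
  have hA' : insert k A ⊆ Finset.Icc 1 n := Finset.insert_subset hk hA
  have hP' : (insert k A).lcm g ≠ 0 := lcm_ne_zero hA'
  -- monotonicity
  have hdvd : A.lcm g ∣ (insert k A).lcm g :=
    Finset.lcm_dvd (fun b hb => Finset.dvd_lcm (Finset.mem_insert_of_mem hb))
  have hmono : degLcm A ≤ degLcm (insert k A) :=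
    Polynomial.natDegree_le_of_dvd hdvd hP'
  -- degree of g k
  have hdegg : (g k).natDegree ≤ n := by
    apply Polynomial.natDegree_sum_le_of_forall_le
    intro i hi
    rw [Polynomial.natDegree_X_pow]
    have := Finset.mem_range.mp hi
    omega
  -- upper bound
  have hdvd2 : (insert k A).lcm g ∣ g k * A.lcm g := by
    rw [Finset.lcm_insert]
    exact lcm_dvd (dvd_mul_right _ _) (dvd_mul_left _ _)
  have e1 : degLcm (insert k A) = ((insert k A).lcm g).natDegree := rfl
  have e2 : degLcm A = (A.lcm g).natDegree := rfl
  have hub : degLcm (insert k A) ≤ degLcm A + n := by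
    have h1 : ((insert k A).lcm g).natDegree ≤ (g k * A.lcm g).natDegree :=
      Polynomial.natDegree_le_of_dvd hdvd2 (mul_ne_zero hgk hP)
    rw [Polynomial.natDegree_mul hgk hP] at h1
    omega
  rw [abs_le]
  constructor
  · have : (degLcm (insert k A) : ℝ) ≥ (degLcm A : ℝ) := by exact_mod_cast hmono
    have hn0 : (0:ℝ) ≤ (n:ℝ) := Nat.cast_nonneg n
    linarith
  · have : (degLcm (insert k A) : ℝ) ≤ (degLcm A : ℝ) + n := by exact_mod_cast hub
    linarith

/-- `V[deg lcm([A]_q)] ≪ α n³` with an absolute implied constant. -/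
theorem variance_degLcm_le : ∃ C : ℝ, 0 < C ∧
    ∀ n : ℕ, ∀ α : ℝ, 0 ≤ α → α ≤ 1 →
      (∑ A ∈ (Finset.Icc 1 n).powerset, prob n α A * (degLcm A : ℝ) ^ 2)
        - (∑ A ∈ (Finset.Icc 1 n).powerset, prob n α A * (degLcm A : ℝ)) ^ 2
      ≤ C * α * (n : ℝ) ^ 3 := by
  refine ⟨1, one_pos, fun n α hα hα1 => ?_⟩
  have hcard : (Finset.Icc 1 n).card = n := by rw [Nat.card_Icc]; omega
  have hE1 : (∑ A ∈ (Finset.Icc 1 n).powerset, prob n α A * (degLcm A : ℝ) ^ 2)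
      = Ex α (Finset.Icc 1 n) (fun A => (degLcm A : ℝ) ^ 2) := by
    unfold Ex prob
    rw [hcard]
  have hE2 : (∑ A ∈ (Finset.Icc 1 n).powerset, prob n α A * (degLcm A : ℝ))
      = Ex α (Finset.Icc 1 n) (fun A => (degLcm A : ℝ)) := by
    unfold Ex prob
    rw [hcard]
  rw [hE1, hE2]
  have key := var_le α (n : ℝ) hα hα1 (Finset.Icc 1 n) (fun A => (degLcm A : ℝ))
    (by
      intro k hk A hA
      exact degLcm_lipschitz hk (Finset.mem_powerset.mp hA))
  rw [hcard] at key
  calc Ex α (Finset.Icc 1 n) (fun A => (degLcm A : ℝ) ^ 2)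
        - (Ex α (Finset.Icc 1 n) fun A => (degLcm A : ℝ)) ^ 2
      ≤ (n : ℝ) * (α * (1 - α) * (n : ℝ) ^ 2) := key
    _ ≤ 1 * α * (n : ℝ) ^ 3 := by
        nlinarith [mul_nonneg (mul_nonneg hα hα) (pow_nonneg (Nat.cast_nonneg (α := ℝ) n) 3)]
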